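/- Let n ≥ 1 and k ≥ 2 be integers, and let w = w_1 w_2 ... w_n be a length-n unbordered word over Σ_k = {1,2,...,k}. Then the rank of w in the lexicographic listing of all length-n unbordered words over Σ_k satisfies rankU_k(w) = 2 + ∑_{i=1}^{n} (w_i - 1)·k^{n-i} - rankB_k(w), where rankB_k(w) = 1 + ∑_{i=1}^{n} ∑_{c=1}^{w_i - 1} B_k(w_1 w_2 ... w_{i-1} c, n). -/

import Mathlib

/-- `u` is a border of `w`: `u` is both a non-empty proper prefix
and a non-empty proper suffix of `w`. -/
def IsBorder {α : Type*} (u w : List α) : Prop :=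
  u ≠ [] ∧ u.length < w.length ∧ u <+: w ∧ u <:+ w

/-- A word is bordered if it has a border. -/
def Bordered {α : Type*} (w : List α) : Prop := ∃ u, IsBorder u w

/-- A word is unbordered if it has no border. -/
def Unbordered {α : Type*} (w : List α) : Prop := ¬ Bordered w

/-- `u` is a shortest border of `w`: a border of `w` of minimum length. -/
def IsShortestBorder {α : Type*} (u w : List α) : Prop :=
  IsBorder u w ∧ ∀ v, IsBorder v w → u.length ≤ v.length

/-- `B k u n`: the number of length-`n` bordered words over the `k`-letter
alphabet `Fin k` that have `u` as a prefix. -/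
noncomputable def B (k : ℕ) (u : List (Fin k)) (n : ℕ) : ℕ :=
  Nat.card {w : List (Fin k) // w.length = n ∧ u <+: w ∧ Bordered w}

open scoped Classical in
/-- Unbordered prefix indicator: `upInd k u i = 1` iff the length-`i` prefix
of `u` is unbordered. -/
noncomputable def upInd (k : ℕ) (u : List (Fin k)) (i : ℕ) : ℕ :=
  if Unbordered (u.take i) then 1 else 0

open scoped Classical in
/-- Border indicator: `bInd k u i = 1` iff `u` has a border of length `i`. -/
noncomputable def bInd (k : ℕ) (u : List (Fin k)) (i : ℕ) : ℕ :=
  if ∃ v, IsBorder v u ∧ v.length = i then 1 else 0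

open scoped Classical

/-- counting Finset on vectors -/
noncomputable def cnt (k n : ℕ) (Q : List (Fin k) → Prop) :
    Finset (List.Vector (Fin k) n) :=
  Finset.univ.filter (fun v => Q v.1)

lemma natCard_eq_cnt (k n : ℕ) (Q : List (Fin k) → Prop) :
    Nat.card {x : List (Fin k) // x.length = n ∧ Q x} = (cnt k n Q).card := by
  rw [cnt, ← Fintype.card_subtype, ← Nat.card_eq_fintype_card]
  exact Nat.card_congr ⟨fun x => ⟨⟨x.1, x.2.1⟩, x.2.2⟩, fun v => ⟨v.1.1, v.1.2, v.2⟩,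
    fun x => rfl, fun v => rfl⟩

lemma card_prefixed (k n : ℕ) (u : List (Fin k)) (hu : u.length ≤ n) :
    Nat.card {x : List (Fin k) // x.length = n ∧ u <+: x} = k ^ (n - u.length) := by
  have e : {x : List (Fin k) // x.length = n ∧ u <+: x} ≃
      List.Vector (Fin k) (n - u.length) :=
    { toFun := fun x => ⟨x.1.drop u.length, by rw [List.length_drop, x.2.1]⟩
      invFun := fun v => ⟨u ++ v.1, by simp [v.2]; omega, List.prefix_append _ _⟩
      left_inv := fun x => by
        obtain ⟨x, hx1, t, rfl⟩ := x
        simp [List.drop_left]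
      right_inv := fun v => by
        obtain ⟨v, hv⟩ := v
        simp [List.drop_left]
        rfl }
  rw [Nat.card_congr e, Nat.card_eq_fintype_card, card_vector, Fintype.card_fin]

lemma lex_iff {α : Type*} [LinearOrder α] :
    ∀ (y x : List α), x.length = y.length →
    (List.Lex (· < ·) x y ↔ ∃ (i : ℕ) (h : i < y.length) (c : α),
        c < y.get ⟨i, h⟩ ∧ y.take i ++ [c] <+: x)
  | [], x, h => by
      simp [List.length_eq_zero_iff.mp h]
  | b :: y', [], h => by simp at h
  | b :: y', a :: x', h => by
    have h' : x'.length = y'.length := by simpa using h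
    constructor
    · intro hl
      cases hl with
      | cons hl' =>
        obtain ⟨i, hi, c, hc, hp⟩ := (lex_iff y' x' h').mp hl'
        exact ⟨i + 1, by simpa using hi, c, by simpa using hc,
          by simpa [List.cons_prefix_cons] using hp⟩
      | rel hab =>
        exact ⟨0, by simp, a, by simpa using hab, by simp [List.cons_prefix_cons]⟩
    · rintro ⟨i, hi, c, hc, hp⟩
      match i with
      | 0 =>
        simp only [List.take_zero, List.nil_append, List.cons_prefix_cons] at hp
        obtain ⟨rfl, -⟩ := hp
        exact List.Lex.rel (by simpa using hc)
      | j + 1 =>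
        simp only [List.take_succ_cons, List.cons_append, List.cons_prefix_cons] at hp
        rw [← hp.1]
        exact List.Lex.cons ((lex_iff y' x' h').mpr
          ⟨j, by simpa using hi, c, by simpa using hc, hp.2⟩)

lemma prefix_unique {α : Type*} [LinearOrder α] {x y : List α} :
    ∀ {i j : ℕ} {c c' : α} (hi : i < y.length) (hj : j < y.length),
    c < y.get ⟨i, hi⟩ → c' < y.get ⟨j, hj⟩ →
    y.take i ++ [c] <+: x → y.take j ++ [c'] <+: x → i = j ∧ c = c' := by
  have key : ∀ {i j : ℕ} {c c' : α} (hi : i < y.length) (hj : j < y.length),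
      c < y.get ⟨i, hi⟩ → c' < y.get ⟨j, hj⟩ →
      y.take i ++ [c] <+: x → y.take j ++ [c'] <+: x → ¬ i < j := by
    intro i j c c' hi hj hc hc' hp hq hij
    have h1 : y.take (i + 1) <+: x := by
      refine ((List.take_prefix_take_left (l := y) hij).trans ?_).trans hq
      exact (List.prefix_append _ _)
    have h2 : y.take (i + 1) = y.take i ++ [y.get ⟨i, hi⟩] := by
      rw [List.take_succ, List.getElem?_eq_getElem hi]
      rfl
    have h3 : y.take i ++ [c] = y.take i ++ [y.get ⟨i, hi⟩] := by
      rcases List.prefix_or_prefix_of_prefix hp (h2 ▸ h1) with h | h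
      · exact h.eq_of_length (by simp only [List.length_append, List.length_take, List.length_singleton]; try omega)
      · exact (h.eq_of_length (by simp only [List.length_append, List.length_take, List.length_singleton]; try omega)).symm
    have := List.append_cancel_left h3
    simp at this
    exact absurd (this ▸ hc) (lt_irrefl _)
  intro i j c c' hi hj hc hc' hp hq
  have hij : i = j := by
    have := key hi hj hc hc' hp hq
    have := key hj hi hc' hc hq hp
    omega
  subst hij
  refine ⟨rfl, ?_⟩
  rcases List.prefix_or_prefix_of_prefix hp hq with h | h
  · have := List.append_cancel_left (h.eq_of_length (by simp))
    simpa using this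
  · have := List.append_cancel_left (h.eq_of_length (by simp))
    simpa using this.symm

lemma main_decomp (k n : ℕ) (w : Fin n → Fin k) (P : List (Fin k) → Prop) :
    Nat.card {x : List (Fin k) // x.length = n ∧ P x ∧ List.Lex (· < ·) x (List.ofFn w)}
      = ∑ i : Fin n, ∑ c ∈ Finset.univ.filter (fun c : Fin k => c < w i),
          Nat.card {x : List (Fin k) //
            x.length = n ∧ ((List.ofFn w).take i ++ [c]) <+: x ∧ P x} := by
  set y := List.ofFn w with hy
  have hylen : y.length = n := List.length_ofFn (f := w)
  have hget : ∀ (i : Fin n) (h : (i : ℕ) < y.length), y.get ⟨i, h⟩ = w i := by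
    intro i h
    simp [hy, List.get_ofFn]
  rw [natCard_eq_cnt]
  simp_rw [natCard_eq_cnt]
  set D : Finset (Fin n × Fin k) := Finset.univ.filter (fun p => p.2 < w p.1) with hD
  have hdisj : ∀ p ∈ D, ∀ q ∈ D, p ≠ q →
      Disjoint (cnt k n (fun x => (y.take p.1 ++ [p.2]) <+: x ∧ P x))
        (cnt k n (fun x => (y.take q.1 ++ [q.2]) <+: x ∧ P x)) := by
    rintro ⟨i, c⟩ hp ⟨j, c'⟩ hq hne
    simp only [hD, Finset.mem_filter] at hp hq
    rw [Finset.disjoint_left]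
    intro v hv1 hv2
    simp only [cnt, Finset.mem_filter] at hv1 hv2
    have h1 : (i : ℕ) < y.length := by rw [hylen]; exact i.2
    have h2 : (j : ℕ) < y.length := by rw [hylen]; exact j.2
    have := prefix_unique (x := v.1) h1 h2
      (by rw [hget i h1]; exact hp.2) (by rw [hget j h2]; exact hq.2)
      hv1.2.1 hv2.2.1
    exact hne (by ext <;> simp [Fin.ext_iff, this.1, this.2])
  have hbi : cnt k n (fun x => P x ∧ List.Lex (· < ·) x y)
      = D.biUnion (fun p => cnt k n (fun x => (y.take p.1 ++ [p.2]) <+: x ∧ P x)) := by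
    ext v
    simp only [cnt, Finset.mem_filter, Finset.mem_univ, true_and, Finset.mem_biUnion, hD]
    constructor
    · rintro ⟨hP, hlex⟩
      rw [lex_iff y v.1 (by rw [v.2, hylen])] at hlex
      obtain ⟨i, hi, c, hc, hp⟩ := hlex
      have hin : i < n := hylen ▸ hi
      refine ⟨(⟨i, hin⟩, c), ?_, hp, hP⟩
      have hg := hget ⟨i, hin⟩ hi
      rw [← hg]
      exact hc
    · rintro ⟨p, hplt, hp, hP⟩
      refine ⟨hP, ?_⟩
      rw [lex_iff y v.1 (by rw [v.2, hylen])]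
      have h1 : (p.1 : ℕ) < y.length := by rw [hylen]; exact p.1.2
      exact ⟨p.1, h1, p.2, by rw [hget p.1 h1]; exact hplt, hp⟩
  rw [hbi, Finset.card_biUnion hdisj, hD, Finset.sum_filter, Fintype.sum_prod_type]
  simp_rw [← Finset.sum_filter]

/-- Ranking unbordered words: for a length-`n` unbordered word `w`,
`rankU_k(w) = 2 + ∑_{i=1}^{n} (w_i - 1)·k^{n-i} - rankB_k(w)`, where
`rankU_k(w)` is `1` plus the number of length-`n` unbordered words
lexicographically smaller than `w`, and
`rankB_k(w) = 1 + ∑_{i=1}^{n} ∑_{c < w_i} B_k(w_1 ⋯ w_{i-1} c, n)`.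
(Letters of `Σ_k = {1,…,k}` are modelled by `Fin k = {0,…,k-1}`, so
`w_i - 1` becomes `(w i : ℕ)`.) -/
theorem rankU_formula (k n : ℕ) (hk : 2 ≤ k) (hn : 1 ≤ n) (w : Fin n → Fin k)
    (hub : Unbordered (List.ofFn w)) :
    1 + Nat.card {x : List (Fin k) // x.length = n ∧ Unbordered x ∧
        List.Lex (· < ·) x (List.ofFn w)}
      = 2 + (∑ i : Fin n, (w i : ℕ) * k ^ (n - 1 - (i : ℕ)))
        - (1 + ∑ i : Fin n, ∑ c ∈ Finset.univ.filter (fun c : Fin k => c < w i),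
            B k ((List.ofFn w).take i ++ [c]) n) := by
  classical
  have hB : Nat.card {x : List (Fin k) // x.length = n ∧ Bordered x ∧
        List.Lex (· < ·) x (List.ofFn w)}
      = ∑ i : Fin n, ∑ c ∈ Finset.univ.filter (fun c : Fin k => c < w i),
          B k ((List.ofFn w).take i ++ [c]) n := main_decomp k n w Bordered
  have hT : Nat.card {x : List (Fin k) // x.length = n ∧ True ∧
        List.Lex (· < ·) x (List.ofFn w)}
      = ∑ i : Fin n, (w i : ℕ) * k ^ (n - 1 - (i : ℕ)) := by
    rw [main_decomp k n w (fun _ => True)]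
    refine Finset.sum_congr rfl (fun i _ => ?_)
    have hterm : ∀ c : Fin k,
        Nat.card {x : List (Fin k) // x.length = n ∧
          ((List.ofFn w).take i ++ [c]) <+: x ∧ True}
        = k ^ (n - 1 - (i : ℕ)) := by
      intro c
      have hlen : ((List.ofFn w).take i ++ [c]).length = (i : ℕ) + 1 := by
        simp only [List.length_append, List.length_take, List.length_ofFn,
          List.length_singleton]
        have := i.2
        omega
      have := card_prefixed k n ((List.ofFn w).take i ++ [c]) (by rw [hlen]; exact i.2)
      rw [hlen] at this
      have heq : Nat.card {x : List (Fin k) // x.length = n ∧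
          ((List.ofFn w).take i ++ [c]) <+: x ∧ True}
          = Nat.card {x : List (Fin k) // x.length = n ∧
          ((List.ofFn w).take i ++ [c]) <+: x} :=
        Nat.card_congr (Equiv.subtypeEquivRight (fun x => by tauto))
      rw [heq, this]
      congr 1
      omega
    simp_rw [hterm]
    rw [Finset.sum_const]
    have hcard : (Finset.univ.filter (fun c : Fin k => c < w i)).card = (w i : ℕ) := by
      rw [show Finset.univ.filter (fun c : Fin k => c < w i) = Finset.Iio (w i) by
        ext c; simp [Finset.mem_Iio]]
      exact Fin.card_Iio _
    rw [hcard, smul_eq_mul]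
  have hsplit : Nat.card {x : List (Fin k) // x.length = n ∧ True ∧
        List.Lex (· < ·) x (List.ofFn w)}
      = Nat.card {x : List (Fin k) // x.length = n ∧ Unbordered x ∧
          List.Lex (· < ·) x (List.ofFn w)}
        + Nat.card {x : List (Fin k) // x.length = n ∧ Bordered x ∧
          List.Lex (· < ·) x (List.ofFn w)} := by
    rw [natCard_eq_cnt k n (fun x => True ∧ List.Lex (· < ·) x (List.ofFn w)),
      natCard_eq_cnt k n (fun x => Unbordered x ∧ List.Lex (· < ·) x (List.ofFn w)),
      natCard_eq_cnt k n (fun x => Bordered x ∧ List.Lex (· < ·) x (List.ofFn w))]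
    rw [← Finset.card_filter_add_card_filter_not
      (s := cnt k n fun x => True ∧ List.Lex (· < ·) x (List.ofFn w))
      (fun v : List.Vector (Fin k) n => Bordered v.1)]
    rw [add_comm]
    congr 1
    · congr 1
      ext v
      simp only [cnt, Finset.mem_filter, Finset.mem_univ, true_and]
      tauto
    · congr 1
      ext v
      simp only [cnt, Finset.mem_filter, Finset.mem_univ, true_and]
      tauto
  omega
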